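/- Let τ and d be even positive integers with d ≥ 4, and let k be a positive integer. Define P(X₁,…,X_k) = (2^(τ/2) X₁ - 1)² + Σ_{i=2}^{k} (X_i - X_{i-1}^(d/2))² + X_k^d. Then the point z with z_i = 2^(-(τ/2)(d/2)^(i-1)) for i = 1,…,k lies in the standard simplex Δ_k, and P(z) = 2^(-τ (d/2)^k). Hence min_{Δ_k} P ≤ 2^(-τ (d/2)^k). -/

import Mathlib

theorem example_min_le (τ d k : ℕ) (hτ : 0 < τ) (hτe : Even τ)
    (hd : 4 ≤ d) (hde : Even d) (hk : 0 < k)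
    (z : ℕ → ℝ) (hz : ∀ i, z i = (2 : ℝ) ^ (-((τ : ℝ) / 2) * ((d : ℝ) / 2) ^ (i - 1))) :
    (∀ i ∈ Finset.Icc 1 k, 0 ≤ z i) ∧ (∑ i ∈ Finset.Icc 1 k, z i) ≤ 1 ∧
      ((2 : ℝ) ^ (τ / 2) * z 1 - 1) ^ 2 +
          (∑ i ∈ Finset.Icc 2 k, (z i - z (i - 1) ^ (d / 2)) ^ 2) + z k ^ d =
        (2 : ℝ) ^ (-(τ : ℝ) * ((d : ℝ) / 2) ^ k) := by
  obtain ⟨m, hm⟩ := hτe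
  obtain ⟨e, he⟩ := hde
  have hm1 : 1 ≤ m := by omega
  have he2 : 2 ≤ e := by omega
  have hτ2 : τ / 2 = m := by omega
  have hd2 : d / 2 = e := by omega
  have hτc : ((τ : ℝ) / 2) = (m : ℝ) := by rw [hm]; push_cast; ring
  have hdc : ((d : ℝ) / 2) = (e : ℝ) := by rw [he]; push_cast; ring
  have hz' : ∀ i, z i = (2 : ℝ) ^ (-(m : ℝ) * (e : ℝ) ^ (i - 1)) := by
    intro i; rw [hz i, hτc, hdc]
  refine ⟨?_, ?_, ?_⟩
  · intro i _; rw [hz' i]; positivity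
  · have hgeom : ∀ n : ℕ, ∑ i ∈ Finset.Icc 1 n, (1/2:ℝ)^i = 1 - (1/2)^n := by
      intro n; induction n with
      | zero => simp
      | succ n ih =>
        rw [Finset.sum_Icc_succ_top (by omega), ih]; ring
    have hle : ∀ i ∈ Finset.Icc 1 k, z i ≤ (1/2 : ℝ) ^ i := by
      intro i hi
      simp only [Finset.mem_Icc] at hi
      have h1 : i ≤ m * e ^ (i - 1) := by
        calc i ≤ 2 ^ (i - 1) := by
              have := Nat.lt_two_pow_self (n := i - 1)
              omega
          _ ≤ e ^ (i - 1) := Nat.pow_le_pow_left he2 _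
          _ ≤ m * e ^ (i - 1) := Nat.le_mul_of_pos_left _ hm1
      have hexp : -(m : ℝ) * (e : ℝ) ^ (i - 1) ≤ -(i : ℝ) := by
        have : (i : ℝ) ≤ (m : ℝ) * (e : ℝ) ^ (i - 1) := by exact_mod_cast h1
        linarith
      have h2 : (1/2:ℝ)^i = (2:ℝ) ^ (-(i:ℝ)) := by
        rw [Real.rpow_neg (by norm_num), Real.rpow_natCast]
        simp [one_div, inv_pow]
      rw [hz' i, h2]
      exact Real.rpow_le_rpow_of_exponent_le (by norm_num) hexp
    calc ∑ i ∈ Finset.Icc 1 k, z i ≤ ∑ i ∈ Finset.Icc 1 k, (1/2:ℝ)^i :=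
          Finset.sum_le_sum hle
      _ = 1 - (1/2)^k := hgeom k
      _ ≤ 1 := sub_le_self 1 (by positivity)
  · have h2pos : (0:ℝ) < 2 := by norm_num
    have h1 : (2 : ℝ) ^ (τ / 2) * z 1 - 1 = 0 := by
      rw [hz' 1, hτ2]
      simp only [Nat.sub_self, pow_zero, mul_one]
      rw [← Real.rpow_natCast 2 m, ← Real.rpow_add h2pos]
      norm_num
    have hmid : ∀ i ∈ Finset.Icc 2 k, (z i - z (i - 1) ^ (d / 2)) ^ 2 = 0 := by
      intro i hi
      simp only [Finset.mem_Icc] at hi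
      have h2i : z (i - 1) ^ (d / 2) = z i := by
        rw [hz' (i-1), hz' i, hd2, ← Real.rpow_natCast ((2:ℝ) ^ (-(m : ℝ) * (e : ℝ) ^ (i - 1 - 1))) e,
          ← Real.rpow_mul h2pos.le]
        congr 1
        have h3 : (e:ℝ) ^ (i - 1) = (e:ℝ) ^ (i - 1 - 1) * e := by
          rw [← pow_succ]
          congr 1
          omega
        rw [h3]; ring
      rw [h2i]; ring
    have hlast : z k ^ d = (2 : ℝ) ^ (-(τ : ℝ) * ((d : ℝ) / 2) ^ k) := by
      rw [hz' k, hdc, ← Real.rpow_natCast ((2:ℝ) ^ (-(m : ℝ) * (e : ℝ) ^ (k - 1))) d,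
        ← Real.rpow_mul h2pos.le]
      congr 1
      have hk' : k = (k - 1) + 1 := by omega
      rw [hm, he]
      push_cast
      nth_rewrite 2 [hk']
      rw [pow_succ]
      ring
    rw [h1, Finset.sum_congr rfl hmid, hlast]
    simp
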